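/- Let f be a signature of arity n and let α, β ∈ supp(f) with d = #1(β) − #1(α) > 0. Then there exists a signature g of arity d, obtained from f by a finite sequence of operations each of which is either a pinning of one variable to a constant or a ≠₂-self-loop, such that g(0^d) ≠ 0 and g(1^d) ≠ 0 (i.e., both the all-zero and the all-one strings lie in supp(g)). -/
import Mathlib


/-- Number of `1`s (Hamming weight) of a Boolean string. -/
def wt1 {n : ℕ} (x : Fin n → Bool) : ℕ := (Finset.univ.filter fun i => x i = true).card

/-- Pinning the `i`-th variable of `f` to the constant `c`. -/
noncomputable def pinSig {n : ℕ} (f : (Fin (n + 1) → Bool) → ℂ) (i : Fin (n + 1)) (c : Bool) :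
    (Fin n → Bool) → ℂ :=
  fun x => f (i.insertNth c x)

/-- The `≠₂`-self-loop of a signature `f` of arity `n+2`, connecting the
variable at position `i` with the variable at position `j` among the remaining
ones: `x ↦ f(x with xᵢ=0, xⱼ=1) + f(x with xᵢ=1, xⱼ=0)`. -/
noncomputable def selfLoop {n : ℕ} (f : (Fin (n + 2) → Bool) → ℂ)
    (i : Fin (n + 2)) (j : Fin (n + 1)) : (Fin n → Bool) → ℂ :=
  fun x => f (i.insertNth false (j.insertNth true x)) +
    f (i.insertNth true (j.insertNth false x))

/-- `PLReach n f m g` : the arity-`m` signature `g` is obtained from the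
arity-`n` signature `f` by a finite (possibly empty) sequence of operations,
each of which is a pinning of one variable to a constant or a
`≠₂`-self-loop. -/
inductive PLReach : (n : ℕ) → ((Fin n → Bool) → ℂ) → (m : ℕ) → ((Fin m → Bool) → ℂ) → Prop
  | refl (n : ℕ) (f : (Fin n → Bool) → ℂ) : PLReach n f n f
  | pinStep {n : ℕ} {f : (Fin n → Bool) → ℂ} {m : ℕ} {g : (Fin (m + 1) → Bool) → ℂ}
      (h : PLReach n f (m + 1) g) (i : Fin (m + 1)) (c : Bool) :
      PLReach n f m (pinSig g i c)
  | loopStep {n : ℕ} {f : (Fin n → Bool) → ℂ} {m : ℕ} {g : (Fin (m + 2) → Bool) → ℂ}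
      (h : PLReach n f (m + 2) g) (i : Fin (m + 2)) (j : Fin (m + 1)) :
      PLReach n f m (selfLoop g i j)

def hamdist {n : ℕ} (x y : Fin n → Bool) : ℕ :=
  (Finset.univ.filter fun i => x i ≠ y i).card

lemma wt1_insertNth {n : ℕ} (i : Fin (n+1)) (c : Bool) (x : Fin n → Bool) :
    wt1 (i.insertNth c x) = (if c then 1 else 0) + wt1 x := by
  simp only [wt1, Finset.card_filter]
  rw [Fin.sum_univ_succAbove _ i]
  simp

lemma hamdist_insertNth {n : ℕ} (i : Fin (n+1)) (c c' : Bool) (x y : Fin n → Bool) :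
    hamdist (i.insertNth c x) (i.insertNth c' y) = (if c = c' then 0 else 1) + hamdist x y := by
  simp only [hamdist, Finset.card_filter]
  rw [Fin.sum_univ_succAbove _ i]
  simp only [Fin.insertNth_apply_same, Fin.insertNth_apply_succAbove]
  congr 1
  by_cases h : c = c' <;> simp [h]

lemma PLReach.trans {n m k : ℕ} {f : (Fin n → Bool) → ℂ} {g : (Fin m → Bool) → ℂ}
    {h : (Fin k → Bool) → ℂ} (h1 : PLReach n f m g) (h2 : PLReach m g k h) :
    PLReach n f k h := by
  induction h2 with
  | refl => exact h1
  | pinStep h i c ih => exact .pinStep ih i c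
  | loopStep h i j ih => exact .loopStep ih i j

lemma wt1_le {n : ℕ} (x : Fin n → Bool) : wt1 x ≤ n := by
  simpa [wt1] using (Finset.card_filter_le Finset.univ (fun i => x i = true))

lemma aux10 : ∀ μ n (f : (Fin n → Bool) → ℂ) (α β : Fin n → Bool),
    f α ≠ 0 → f β ≠ 0 → ∀ d : ℕ, 0 < d → wt1 β = wt1 α + d → n + hamdist α β ≤ μ →
    ∃ g : (Fin d → Bool) → ℂ, PLReach n f d g ∧
      g (fun _ => false) ≠ 0 ∧ g (fun _ => true) ≠ 0 := by
  intro μ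
  induction μ with
  | zero =>
    intro n f α β hα hβ d hd hwt hμ
    have hn : n = 0 := by omega
    subst hn
    simp [wt1] at hwt
    omega
  | succ μ ih =>
    intro n f α β hα hβ d hd hwt hμ
    by_cases hagree : ∃ i, α i = β i
    · obtain ⟨i, hi⟩ := hagree
      match n, f, α, β, i, hα, hβ, hwt, hμ, hi with
      | 0, _, _, _, i, _, _, _, _, _ => exact i.elim0
      | m + 1, f, α, β, i, hα, hβ, hwt, hμ, hi =>
      have hrα : i.insertNth (α i) (i.removeNth α) = α := Fin.insertNth_self_removeNth i α
      have hrβ : i.insertNth (β i) (i.removeNth β) = β := Fin.insertNth_self_removeNth i β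
      have hwα := wt1_insertNth i (α i) (i.removeNth α); rw [hrα] at hwα
      have hwβ := wt1_insertNth i (β i) (i.removeNth β); rw [hrβ] at hwβ
      have hdist := hamdist_insertNth i (α i) (β i) (i.removeNth α) (i.removeNth β)
      rw [hrα, hrβ, if_pos hi] at hdist
      have hwt' : wt1 (i.removeNth β) = wt1 (i.removeNth α) + d := by
        rw [hi] at hwα
        cases hc : β i <;> rw [hc] at hwα hwβ <;> norm_num at hwα hwβ <;> omega
      obtain ⟨g, hg, h0, h1⟩ := ih m (pinSig f i (α i)) (i.removeNth α) (i.removeNth β)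
        (by simpa [pinSig, hrα] using hα)
        (by rw [hi]; simpa [pinSig, hrβ] using hβ)
        d hd hwt' (by omega)
      exact ⟨g, PLReach.trans (.pinStep (.refl _ f) i (α i)) hg, h0, h1⟩
    · push_neg at hagree
      by_cases hone : ∃ i, α i = true
      · -- self-loop case; need n = m + 2
        obtain ⟨i, hi⟩ := hone
        have hαlt : wt1 α < n := by
          have := wt1_le β; omega
        have hzero : ∃ j0, α j0 = false := by
          by_contra h
          push_neg at h
          have hall : ∀ k, α k = true := by
            intro k
            cases hk : α k
            · exact absurd hk (h k)
            · rfl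
          have : wt1 α = n := by simp [wt1, hall]
          omega
        obtain ⟨j0, hj0⟩ := hzero
        have hij0 : j0 ≠ i := fun h => by rw [h, hi] at hj0; exact Bool.noConfusion hj0
        match n, f, α, β, i, j0, hα, hβ, hwt, hμ, hagree, hi, hj0, hij0 with
        | 0, _, _, _, i, _, _, _, _, _, _, _, _, _ => exact i.elim0
        | 1, f, α, β, i, j0, hα, hβ, hwt, hμ, hagree, hi, hj0, hij0 =>
          exact absurd (Subsingleton.elim j0 i) hij0
        | m + 2, f, α, β, i, j0, hα, hβ, hwt, hμ, hagree, hi, hj0, hij0 =>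
        obtain ⟨j, hj⟩ := Fin.exists_succAbove_eq hij0
        -- decompositions
        set xα := j.removeNth (i.removeNth α) with hxα
        set xβ := j.removeNth (i.removeNth β) with hxβ
        have hyαj : (i.removeNth α) j = false := by
          simp only [Fin.removeNth, hj, hj0]
        have hyβj : (i.removeNth β) j = true := by
          have := hagree j0
          simp only [Fin.removeNth, hj]
          rcases hβj : β j0 with _ | _
          · rw [hβj, hj0] at this; exact absurd rfl this
          · rfl
        have hβi : β i = false := by
          have := hagree i
          rcases hβi : β i with _ | _
          · rfl
          · rw [hβi, hi] at this; exact absurd rfl this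
        have hdecα : i.insertNth true (j.insertNth false xα) = α := by
          rw [hxα, ← hyαj, Fin.insertNth_self_removeNth, ← hi, Fin.insertNth_self_removeNth]
        have hdecβ : i.insertNth false (j.insertNth true xβ) = β := by
          rw [hxβ, ← hyβj, Fin.insertNth_self_removeNth, ← hβi, Fin.insertNth_self_removeNth]
        have hwtα : wt1 α = 1 + wt1 xα := by
          rw [← hdecα, wt1_insertNth, wt1_insertNth]; simp
        have hwtβ : wt1 β = 1 + wt1 xβ := by
          rw [← hdecβ, wt1_insertNth, wt1_insertNth]; simp
        have hdistαβ : hamdist α β = 2 + hamdist xα xβ := by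
          rw [← hdecα, ← hdecβ, hamdist_insertNth, hamdist_insertNth]; norm_num; omega
        by_cases hgα : selfLoop f i j xα = 0
        · -- f α' ≠ 0, α' closer to β
          set α' : Fin (m + 2) → Bool := i.insertNth false (j.insertNth true xα) with hα'
          have hfα' : f α' ≠ 0 := by
            intro h
            rw [selfLoop, ← hα', h, hdecα, zero_add] at hgα
            exact hα hgα
          have hwtα' : wt1 α' = wt1 α := by
            rw [hα', wt1_insertNth, wt1_insertNth, hwtα]; simp
          have hdistα' : hamdist α' β = hamdist xα xβ := by
            rw [hα', ← hdecβ, hamdist_insertNth, hamdist_insertNth]; simp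
          exact ih (m + 2) f α' β hfα' hβ d hd (by omega) (by omega)
        · by_cases hgβ : selfLoop f i j xβ = 0
          · set β' : Fin (m + 2) → Bool := i.insertNth true (j.insertNth false xβ) with hβ'
            have hfβ' : f β' ≠ 0 := by
              intro h
              rw [selfLoop, ← hβ', h, hdecβ, add_zero] at hgβ
              exact hβ hgβ
            have hwtβ' : wt1 β' = wt1 β := by
              rw [hβ', wt1_insertNth, wt1_insertNth, hwtβ]; simp
            have hdistβ' : hamdist α β' = hamdist xα xβ := by
              rw [hβ', ← hdecα, hamdist_insertNth, hamdist_insertNth]; simp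
            exact ih (m + 2) f α β' hα hfβ' d hd (by omega) (by omega)
          · obtain ⟨g, hg, h0, h1⟩ := ih m (selfLoop f i j) xα xβ hgα hgβ d hd
              (by omega) (by omega)
            exact ⟨g, PLReach.trans (.loopStep (.refl _ f) i j) hg, h0, h1⟩
      · -- α all false, β all true, n = d
        push_neg at hone
        have hαf : α = fun _ => false := by
          funext k; exact Bool.eq_false_iff.mpr (fun h => hone k (by simpa using h))
        have hβt : β = fun _ => true := by
          funext k
          have := hagree k
          rcases h : β k with _ | _
          · rw [hαf] at this; simp [h] at this
          · rfl
        have hwα0 : wt1 α = 0 := by simp [wt1, hαf]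
        have hwβn : wt1 β = n := by
          simp [wt1, hβt]
        have hnd : d = n := by omega
        subst hnd
        exact ⟨f, .refl _ f, by rwa [← hαf], by rwa [← hβt]⟩

/-- if `α, β ∈ supp(f)` with `d = #1(β) − #1(α) > 0`, then a
finite sequence of pinnings and `≠₂`-self-loops applied to `f` yields a
signature `g` of arity `d` with `g(0^d) ≠ 0` and `g(1^d) ≠ 0`. -/
theorem stmt10 {n : ℕ} (f : (Fin n → Bool) → ℂ) (α β : Fin n → Bool)
    (hα : f α ≠ 0) (hβ : f β ≠ 0) (d : ℕ) (hd : 0 < d) (hwt : wt1 β = wt1 α + d) :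
    ∃ g : (Fin d → Bool) → ℂ, PLReach n f d g ∧
      g (fun _ => false) ≠ 0 ∧ g (fun _ => true) ≠ 0 := by
  exact aux10 (n + hamdist α β) n f α β hα hβ d hd hwt le_rfl
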